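/- Let u* (r,θ) = (r³/9)(1 − sin 3θ) on the cone {π/6 < θ < 5π/6} ⊂ ℝ², let e = (−sin(π/6+γ), cos(π/6+γ)) with γ ∈ (−π/2, π/2), let e* = (−1/2, √3/2), and let c₀ > 0, ε > 0. If e·e* ≥ ((c₀+1)/(2c₀))·ε, then c₀ ∂_e u* − u* ≥ 0 on (B₁ \ {0}) ∩ {π/6 < θ < π/6 + ε}. -/

import Mathlib

open Real Set

noncomputable def fcart (q : ℝ × ℝ) : ℝ :=
  ((q.1 ^ 2 + q.2 ^ 2) * Real.sqrt (q.1 ^ 2 + q.2 ^ 2) - 3 * q.1 ^ 2 * q.2 + q.2 ^ 3) / 9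

lemma ustar_eq_fcart (ustar : ℝ × ℝ → ℝ)
    (hcone : ∀ r θ : ℝ, 0 < r → π / 6 < θ → θ < 5 * π / 6 →
      ustar (r * cos θ, r * sin θ) = r ^ 3 / 9 * (1 - sin (3 * θ)))
    (q : ℝ × ℝ) (hq : |q.1| < Real.sqrt 3 * q.2) : ustar q = fcart q := by
  have h3 : Real.sqrt 3 ^ 2 = 3 := Real.sq_sqrt (by norm_num)
  have hy : 0 < q.2 := by
    by_contra h
    push_neg at h
    have : Real.sqrt 3 * q.2 ≤ 0 :=
      mul_nonpos_of_nonneg_of_nonpos (Real.sqrt_nonneg 3) h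
    have := abs_nonneg q.1
    linarith
  have hx2 : q.1 ^ 2 < 3 * q.2 ^ 2 := by
    have h1 := abs_nonneg q.1
    have h2 : |q.1| * |q.1| < (Real.sqrt 3 * q.2) * (Real.sqrt 3 * q.2) :=
      mul_self_lt_mul_self h1 hq
    have h4 := sq_abs q.1
    nlinarith
  set R := Real.sqrt (q.1 ^ 2 + q.2 ^ 2) with hRdef
  have hRpos : 0 < R := Real.sqrt_pos.2 (by nlinarith)
  have hR2 : R ^ 2 = q.1 ^ 2 + q.2 ^ 2 := Real.sq_sqrt (by nlinarith)
  have hxR : |q.1| ≤ R := by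
    rw [← Real.sqrt_sq_eq_abs]
    exact Real.sqrt_le_sqrt (by nlinarith)
  have ht1 : -1 ≤ q.1 / R := by
    rw [le_div_iff₀ hRpos]
    have := abs_le.1 hxR
    linarith [this.1]
  have ht2 : q.1 / R ≤ 1 := by
    rw [div_le_iff₀ hRpos]
    have := abs_le.1 hxR
    linarith [this.2]
  set θ₀ := Real.arccos (q.1 / R) with hθ₀def
  have hcos : cos θ₀ = q.1 / R := Real.cos_arccos ht1 ht2
  have hsin : sin θ₀ = q.2 / R := by
    rw [hθ₀def, Real.sin_arccos]
    have : 1 - (q.1 / R) ^ 2 = (q.2 / R) ^ 2 := by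
      field_simp
      nlinarith
    rw [this, Real.sqrt_sq (by positivity)]
  have hq1 : q = (R * cos θ₀, R * sin θ₀) := by
    rw [hcos, hsin]
    have e1 : R * (q.1 / R) = q.1 := by field_simp
    have e2 : R * (q.2 / R) = q.2 := by field_simp
    rw [e1, e2]
  -- bounds on θ₀
  have hsqrt3R : |q.1| * 2 < Real.sqrt 3 * R := by
    have h5 : (|q.1| * 2) ^ 2 < (Real.sqrt 3 * R) ^ 2 := by
      rw [mul_pow, mul_pow, sq_abs, h3, hR2]
      nlinarith
    have h6 : (0:ℝ) ≤ Real.sqrt 3 * R := by positivity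
    nlinarith [abs_nonneg q.1]
  have hθ₀lb : π / 6 < θ₀ := by
    by_contra h
    push_neg at h
    have h1 : cos θ₀ ≥ cos (π / 6) := by
      apply Real.cos_le_cos_of_nonneg_of_le_pi (Real.arccos_nonneg _) _ h
      linarith [Real.pi_pos]
    rw [Real.cos_pi_div_six, hcos] at h1
    have h7 : Real.sqrt 3 / 2 * R ≤ q.1 := (le_div_iff₀ hRpos).1 h1
    have h8 := le_abs_self q.1
    nlinarith
  have hθ₀ub : θ₀ < 5 * π / 6 := by
    by_contra h
    push_neg at h
    have h1 : cos θ₀ ≤ cos (5 * π / 6) := by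
      apply Real.cos_le_cos_of_nonneg_of_le_pi _ (Real.arccos_le_pi _) h
      linarith [Real.pi_pos]
    have h2 : cos (5 * π / 6) = -(Real.sqrt 3 / 2) := by
      have : (5 : ℝ) * π / 6 = π - π / 6 := by ring
      rw [this, Real.cos_pi_sub, Real.cos_pi_div_six]
    rw [h2, hcos] at h1
    have h7 : q.1 ≤ -(Real.sqrt 3 / 2) * R := by
      rw [div_le_iff₀ hRpos] at h1
      linarith
    have h8 := neg_abs_le q.1
    nlinarith
  rw [hq1, hcone R θ₀ hRpos hθ₀lb hθ₀ub]
  unfold fcart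
  have hsum : sin θ₀ ^ 2 + cos θ₀ ^ 2 = 1 := Real.sin_sq_add_cos_sq θ₀
  have hss : (R * cos θ₀) ^ 2 + (R * sin θ₀) ^ 2 = R ^ 2 := by nlinarith
  rw [Real.sin_three_mul]
  simp only [hss]
  rw [Real.sqrt_sq hRpos.le]
  linear_combination (R ^ 3 * sin θ₀ / 3) * hsum

set_option maxHeartbeats 1000000 in
theorem stmt10 (γ c₀ ε : ℝ) (hγ : γ ∈ Set.Ioo (-(π / 2)) (π / 2)) (hc₀ : 0 < c₀) (hε : 0 < ε)
    (ustar : ℝ × ℝ → ℝ)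
    (hcone : ∀ r θ : ℝ, 0 < r → π / 6 < θ → θ < 5 * π / 6 →
      ustar (r * cos θ, r * sin θ) = r ^ 3 / 9 * (1 - sin (3 * θ)))
    (hzero : ∀ p : ℝ × ℝ,
      (¬ ∃ r θ : ℝ, 0 < r ∧ π / 6 < θ ∧ θ < 5 * π / 6 ∧
        p = (r * cos θ, r * sin θ)) → ustar p = 0)
    (hdot : (-sin (π / 6 + γ)) * (-(1 / 2)) + cos (π / 6 + γ) * (Real.sqrt 3 / 2) ≥
      (c₀ + 1) / (2 * c₀) * ε) :
    ∀ r θ : ℝ, 0 < r → r < 1 → π / 6 < θ → θ < π / 6 + ε →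
      0 ≤ c₀ * lineDeriv ℝ ustar (r * cos θ, r * sin θ)
            (-sin (π / 6 + γ), cos (π / 6 + γ)) -
          ustar (r * cos θ, r * sin θ) := by
  intro r θ hr hr1 hθ1 hθ2
  have hrne : r ≠ 0 := ne_of_gt hr
  have h3 : Real.sqrt 3 ^ 2 = 3 := Real.sq_sqrt (by norm_num)
  -- the dot product equals cos γ
  have hdotcos : (-sin (π / 6 + γ)) * (-(1 / 2)) + cos (π / 6 + γ) * (Real.sqrt 3 / 2)
      = cos γ := by
    rw [Real.sin_add, Real.cos_add, Real.sin_pi_div_six, Real.cos_pi_div_six]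
    linear_combination (cos γ / 4) * h3
  rw [hdotcos] at hdot
  have hcγ1 : cos γ ≤ 1 := Real.cos_le_one γ
  have hcγ' : (c₀ + 1) * ε ≤ 2 * c₀ * cos γ := by
    rw [ge_iff_le, div_mul_eq_mul_div, div_le_iff₀ (by positivity)] at hdot
    linarith
  have hεlt2 : ε < 2 := by
    have k : c₀ * cos γ ≤ c₀ := by nlinarith [mul_le_mul_of_nonneg_left hcγ1 hc₀.le]
    nlinarith
  have hπ3 := Real.pi_gt_three
  have hθ5 : θ < 5 * π / 6 := by linarith
  set e1 : ℝ := -sin (π / 6 + γ) with he1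
  set e2 : ℝ := cos (π / 6 + γ) with he2
  set x0 : ℝ := r * cos θ with hx0
  set y0 : ℝ := r * sin θ with hy0
  -- point is in the open cone
  have hsθ : 0 < sin (θ - π / 6) :=
    Real.sin_pos_of_pos_of_lt_pi (by linarith) (by linarith)
  have hsθ' : 0 < sin (5 * π / 6 - θ) :=
    Real.sin_pos_of_pos_of_lt_pi (by linarith) (by linarith)
  have hineq1 : cos θ < Real.sqrt 3 * sin θ := by
    rw [Real.sin_sub, Real.sin_pi_div_six, Real.cos_pi_div_six] at hsθ
    linarith
  have hineq2 : -(Real.sqrt 3 * sin θ) < cos θ := by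
    have h56s : sin (5 * π / 6) = 1 / 2 := by
      have : (5 : ℝ) * π / 6 = π - π / 6 := by ring
      rw [this, Real.sin_pi_sub, Real.sin_pi_div_six]
    have h56c : cos (5 * π / 6) = -(Real.sqrt 3 / 2) := by
      have : (5 : ℝ) * π / 6 = π - π / 6 := by ring
      rw [this, Real.cos_pi_sub, Real.cos_pi_div_six]
    rw [Real.sin_sub, h56s, h56c] at hsθ'
    linarith
  have hpU : |x0| < Real.sqrt 3 * y0 := by
    rw [abs_lt]
    have k1 := mul_lt_mul_of_pos_left hineq1 hr
    have k2 := mul_lt_mul_of_pos_left hineq2 hr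
    constructor
    · rw [hx0, hy0]; nlinarith [k2]
    · rw [hx0, hy0]; nlinarith [k1]
  -- open set
  have hU : IsOpen {q : ℝ × ℝ | |q.1| < Real.sqrt 3 * q.2} :=
    isOpen_lt (continuous_fst.abs) (continuous_const.mul continuous_snd)
  have hee : ustar =ᶠ[nhds ((x0, y0) : ℝ × ℝ)] fcart := by
    filter_upwards [hU.mem_nhds hpU] with q hq
    exact ustar_eq_fcart ustar hcone q hq
  -- derivative computation
  have hr2 : x0 ^ 2 + y0 ^ 2 = r ^ 2 := by
    rw [hx0, hy0]
    linear_combination r ^ 2 * Real.sin_sq_add_cos_sq θ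
  have hsq : Real.sqrt (x0 ^ 2 + y0 ^ 2) = r := by rw [hr2]; exact Real.sqrt_sq hr.le
  have hX : HasDerivAt (fun t : ℝ => x0 + t * e1) e1 0 := by
    simpa using ((hasDerivAt_id (0 : ℝ)).mul_const e1).const_add x0
  have hY : HasDerivAt (fun t : ℝ => y0 + t * e2) e2 0 := by
    simpa using ((hasDerivAt_id (0 : ℝ)).mul_const e2).const_add y0
  have hS : HasDerivAt (fun t : ℝ => (x0 + t * e1) ^ 2 + (y0 + t * e2) ^ 2)
      (2 * x0 * e1 + 2 * y0 * e2) 0 := by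
    have h := (hX.pow 2).add (hY.pow 2)
    norm_num at h
    convert h using 1 <;> first | rfl | ring
  have hSsqrt : HasDerivAt (fun t : ℝ => Real.sqrt ((x0 + t * e1) ^ 2 + (y0 + t * e2) ^ 2))
      ((2 * x0 * e1 + 2 * y0 * e2) / (2 * r)) 0 := by
    have hne : (x0 + (0:ℝ) * e1) ^ 2 + (y0 + (0:ℝ) * e2) ^ 2 ≠ 0 := by
      rw [show x0 + (0:ℝ) * e1 = x0 by ring, show y0 + (0:ℝ) * e2 = y0 by ring, hr2]
      positivity
    have h := hS.sqrt (by simpa using hne)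
    rw [show (x0 + (0:ℝ) * e1) ^ 2 + (y0 + (0:ℝ) * e2) ^ 2 = x0 ^ 2 + y0 ^ 2 by ring, hsq] at h
    exact h
  have hbig : HasDerivAt (fun t : ℝ =>
      (((x0 + t * e1) ^ 2 + (y0 + t * e2) ^ 2) *
        Real.sqrt ((x0 + t * e1) ^ 2 + (y0 + t * e2) ^ 2) -
        3 * (x0 + t * e1) ^ 2 * (y0 + t * e2) + (y0 + t * e2) ^ 3) / 9)
      (((2 * x0 * e1 + 2 * y0 * e2) * r + r ^ 2 * ((2 * x0 * e1 + 2 * y0 * e2) / (2 * r))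
        - 3 * (2 * x0 * e1 * y0 + x0 ^ 2 * e2) + 3 * y0 ^ 2 * e2) / 9) 0 := by
    have h1 := hS.mul hSsqrt
    have h2 := ((hX.pow 2).mul hY).const_mul (3 : ℝ)
    have h3' := hY.pow 3
    have h := ((h1.sub h2).add h3').div_const (9 : ℝ)
    norm_num at h
    rw [hr2, Real.sqrt_sq hr.le] at h
    convert h using 1 <;> first | rfl | (funext t; ring) | ring
  set D0 : ℝ := ((2 * x0 * e1 + 2 * y0 * e2) * r + r ^ 2 * ((2 * x0 * e1 + 2 * y0 * e2) / (2 * r))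
        - 3 * (2 * x0 * e1 * y0 + x0 ^ 2 * e2) + 3 * y0 ^ 2 * e2) / 9 with hD0def
  have hlf : HasLineDerivAt ℝ fcart D0 ((x0, y0) : ℝ × ℝ) ((e1, e2) : ℝ × ℝ) := by
    show HasDerivAt (fun t : ℝ => fcart (((x0, y0) : ℝ × ℝ) + t • ((e1, e2) : ℝ × ℝ))) D0 0
    have heq : (fun t : ℝ => fcart (((x0, y0) : ℝ × ℝ) + t • ((e1, e2) : ℝ × ℝ)))
        = fun t : ℝ => (((x0 + t * e1) ^ 2 + (y0 + t * e2) ^ 2) *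
        Real.sqrt ((x0 + t * e1) ^ 2 + (y0 + t * e2) ^ 2) -
        3 * (x0 + t * e1) ^ 2 * (y0 + t * e2) + (y0 + t * e2) ^ 3) / 9 := by
      funext t
      simp [fcart, Prod.smul_mk, smul_eq_mul, Prod.mk_add_mk]
    rw [heq]
    exact hbig
  have hlu : HasLineDerivAt ℝ ustar D0 ((x0, y0) : ℝ × ℝ) ((e1, e2) : ℝ × ℝ) :=
    hlf.congr_of_eventuallyEq hee
  have hld : lineDeriv ℝ ustar ((x0, y0) : ℝ × ℝ) ((e1, e2) : ℝ × ℝ) = D0 := hlu.lineDeriv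
  have hueq : ustar ((x0, y0) : ℝ × ℝ) = r ^ 3 / 9 * (1 - sin (3 * θ)) := by
    rw [hx0, hy0]; exact hcone r θ hr hθ1 hθ5
  rw [hld, hueq]
  -- half-angle substitution
  set ψ : ℝ := (θ - π / 6) / 2 with hψdef
  have hθψ : θ = π / 6 + 2 * ψ := by rw [hψdef]; ring
  have hψ0 : 0 < ψ := by rw [hψdef]; linarith
  have hψε : 2 * ψ < ε := by rw [hψdef]; linarith
  -- simplify D0 to polar form
  have h2r : r ^ 2 * ((2 * x0 * e1 + 2 * y0 * e2) / (2 * r)) = r * (x0 * e1 + y0 * e2) := by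
    field_simp
  have hD0polar : D0 = (r ^ 2 * cos θ * e1 + r ^ 2 * sin θ * e2
      - 2 * r ^ 2 * cos θ * sin θ * e1 - r ^ 2 * cos θ ^ 2 * e2 + r ^ 2 * sin θ ^ 2 * e2) / 3 := by
    rw [hD0def, h2r, hx0, hy0]
    ring
  -- key trig identity for D0
  have hkey : D0 = 2 * r ^ 2 / 3 * sin (3 * ψ) * cos (γ + ψ) := by
    have hang1 : θ - (π / 6 + γ) = 3 * ψ - (ψ + γ) := by rw [hθψ]; ring
    have hang2 : 2 * θ + (π / 6 + γ) = π / 2 + (3 * ψ + (ψ + γ)) := by rw [hθψ]; ring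
    have step1 : D0 = r ^ 2 / 3 * (sin (θ - (π / 6 + γ)) - cos (2 * θ + (π / 6 + γ))) := by
      rw [hD0polar, he1, he2, Real.sin_sub θ (π / 6 + γ), Real.cos_add (2 * θ) (π / 6 + γ),
        Real.sin_two_mul, Real.cos_two_mul']
      ring
    rw [step1, hang1, hang2, Real.sin_sub (3 * ψ) (ψ + γ), Real.cos_add (π / 2) (3 * ψ + (ψ + γ)),
      Real.cos_pi_div_two, Real.sin_pi_div_two, Real.sin_add (3 * ψ) (ψ + γ), add_comm γ ψ]
    ring
  -- identity for ustar
  have husin : sin (3 * θ) = 1 - 2 * sin (3 * ψ) ^ 2 := by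
    have hang : 3 * θ = π / 2 + 2 * (3 * ψ) := by rw [hθψ]; ring
    rw [hang, Real.sin_add, Real.sin_pi_div_two, Real.cos_pi_div_two, Real.cos_two_mul]
    linear_combination 2 * Real.sin_sq_add_cos_sq (3 * ψ)
  rw [hkey, husin]
  -- final inequality
  set s : ℝ := sin (3 * ψ) with hsdef
  have hψlt1 : ψ < 1 := by linarith
  have hs0 : 0 ≤ s := Real.sin_nonneg_of_nonneg_of_le_pi (by linarith) (by linarith)
  have hs1 : s ≤ 3 * ψ := Real.sin_le (by linarith)
  have hclow : cos γ - ψ ≤ cos (γ + ψ) := by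
    have hcc := Real.cos_sub_cos γ (γ + ψ)
    have h1 : 0 ≤ sin (ψ / 2) := Real.sin_nonneg_of_nonneg_of_le_pi (by linarith) (by linarith)
    have h2 : sin (ψ / 2) ≤ ψ / 2 := Real.sin_le (by linarith)
    have h3' : sin ((γ + (γ + ψ)) / 2) ≤ 1 := Real.sin_le_one _
    have h4 : (γ - (γ + ψ)) / 2 = -(ψ / 2) := by ring
    rw [h4, Real.sin_neg] at hcc
    have m1 : sin ((γ + (γ + ψ)) / 2) * sin (ψ / 2) ≤ 1 * sin (ψ / 2) :=
      mul_le_mul_of_nonneg_right h3' h1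
    linarith
  have hB : 0 ≤ c₀ * cos (γ + ψ) - r / 3 * s := by
    have k1 : c₀ * (cos γ - ψ) ≤ c₀ * cos (γ + ψ) := mul_le_mul_of_nonneg_left hclow hc₀.le
    have k2 : r * s ≤ r * (3 * ψ) := mul_le_mul_of_nonneg_left hs1 hr.le
    have k3 : r * (3 * ψ) < 1 * (3 * ψ) := mul_lt_mul_of_pos_right hr1 (by linarith)
    have k4 : (c₀ + 1) * (2 * ψ) < (c₀ + 1) * ε := mul_lt_mul_of_pos_left hψε (by linarith)
    linarith [k1, k2, k3, k4]
  have hfinal : c₀ * (2 * r ^ 2 / 3 * s * cos (γ + ψ)) - r ^ 3 / 9 * (1 - (1 - 2 * s ^ 2))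
      = 2 * r ^ 2 / 3 * s * (c₀ * cos (γ + ψ) - r / 3 * s) := by ring
  rw [hfinal]
  exact mul_nonneg (mul_nonneg (by positivity) hs0) hB
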